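/- Let p^m ≡ 3 (mod 4), α a nonzero non-square in F_{p^m}, β ∈ F_{p^m} nonzero. Every ideal of the ring 𝓡 = R[x]/⟨x^{4p^s}-(α+βu)⟩, where R = F_{p^m}[u]/⟨u²⟩, is of the form ⟨(x²+γx+γ²/2)^i (x²-γx+γ²/2)^j⟩ for some 0 ≤ i, j ≤ 2p^s, where γ^4 = -4α₀ and α₀^{p^s} = α. In particular 𝓡 is a principal ideal ring. -/

import Mathlib

open Polynomial

/-- The chain ring `R = F_{p^m}[u]/⟨u²⟩`. -/
abbrev Ru (K : Type) [Field K] : Type := K[X] ⧸ Ideal.span {(X : K[X]) ^ 2}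

/-- The element `u` of `R`. -/
noncomputable def uR (K : Type) [Field K] : Ru K :=
  Ideal.Quotient.mk _ (X : K[X])

/-- The natural inclusion of `F_{p^m}` into `R`. -/
noncomputable def tR (K : Type) [Field K] (a : K) : Ru K :=
  Ideal.Quotient.mk _ (C a : K[X])

/-- The ambient ring `R[x]/⟨xⁿ - λ⟩` of `λ`-constacyclic codes of length `n` over `R`. -/
abbrev RC (K : Type) [Field K] (lam : Ru K) (n : ℕ) : Type :=
  (Ru K)[X] ⧸ Ideal.span {(X : (Ru K)[X]) ^ n - C lam}

/-- The canonical projection `R[x] → R[x]/⟨xⁿ - λ⟩`. -/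
noncomputable instance RC.instCommRing (K : Type) [Field K] (lam : Ru K) (n : ℕ) :
    CommRing (RC K lam n) :=
  @Ideal.Quotient.commRing (Ru K)[X] _ _

/-- The canonical projection `R[x] → R[x]/⟨xⁿ - λ⟩`. -/
noncomputable def mkC (K : Type) [Field K] (lam : Ru K) (n : ℕ) :
    (Ru K)[X] →+* RC K lam n :=
  @Ideal.Quotient.mk (Ru K)[X] _ _ ⟨fun b ha => mul_comm b _ ▸ Ideal.mul_mem_left _ b ha⟩

/-- The quadratic `x² + γx + γ²/2`, viewed over `R`. -/
noncomputable def qR (K : Type) [Field K] (g : K) : (Ru K)[X] :=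
  X ^ 2 + C (tR K g) * X + C (tR K (g ^ 2 / 2))

/-! ### Auxiliary lemmas -/

/-- The quadratic `x² + gx + g²/2` over the base field. -/
noncomputable def Qq {K : Type} [Field K] (g : K) : K[X] := X ^ 2 + C g * X + C (g ^ 2 / 2)

lemma Qq_monic {K : Type} [Field K] (g : K) : (Qq g).Monic := by unfold Qq; monicity!

lemma Qq_natDegree {K : Type} [Field K] (g : K) : (Qq g).natDegree = 2 := by
  unfold Qq; compute_degree!

lemma Qq_mul {K : Type} [Field K] (h2 : (2:K) ≠ 0) (γ α₀ : K) (hγ : γ ^ 4 = -4 * α₀) :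
    Qq γ * Qq (-γ) = X ^ 4 - C α₀ := by
  have e1 : (γ^2/2) + (γ^2/2) - γ * γ = 0 := by field_simp; ring
  have e2 : (γ^2/2) * (γ^2/2) = -α₀ := by field_simp; linear_combination hγ
  have expand : ∀ a c : K[X], (X^2 + a*X + c) * (X^2 + (-a)*X + c)
      = X^4 + (c + c - a*a) * X^2 + c*c := by intros; ring
  unfold Qq
  simp only [neg_sq, map_neg]
  rw [expand, ← C_add, ← C_mul, ← C_sub, e1, C_0, zero_mul, add_zero, ← C_mul, e2, C_neg,
    sub_eq_add_neg]

lemma Qq_irreducible {K : Type} [Field K] (h2 : (2:K) ≠ 0) (hsq : ¬ IsSquare (-1 : K))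
    {g : K} (hg : g ≠ 0) : Irreducible (Qq g) := by
  rw [irreducible_iff_roots_eq_zero_of_degree_le_three (by rw [Qq_natDegree])
    (by rw [Qq_natDegree]; norm_num), Multiset.eq_zero_iff_forall_notMem]
  intro r hr
  rw [mem_roots (Qq_monic g).ne_zero] at hr
  have hroot : r^2 + g*r + g^2/2 = 0 := by simpa [Qq, IsRoot] using hr
  refine hsq ⟨(2*r+g)/g, ?_⟩
  field_simp at hroot ⊢
  linear_combination (-2 : K)*hroot

lemma natCard_adjoinRoot {R : Type} [CommRing R] {g : R[X]} (hg : g.Monic) :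
    Nat.card (AdjoinRoot g) = Nat.card R ^ g.natDegree := by
  rw [Nat.card_congr (AdjoinRoot.powerBasisAux' hg).equivFun.toEquiv]
  simp [Nat.card_pi]

lemma finite_adjoinRoot {R : Type} [CommRing R] [Finite R] {g : R[X]} (hg : g.Monic) :
    Finite (AdjoinRoot g) :=
  Finite.of_equiv _ (AdjoinRoot.powerBasisAux' hg).equivFun.toEquiv.symm

lemma charP_of_card {K : Type} [Field K] [Fintype K] {p m : ℕ} (hp : p.Prime) (hm : 0 < m)
    (hK : Fintype.card K = p ^ m) : CharP K p := by
  haveI : CharP K (ringChar K) := ringChar.charP K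
  obtain ⟨n, hq, hcard⟩ := FiniteField.card K (ringChar K)
  have hdvd : p ∣ ringChar K ^ (n:ℕ) := by
    rw [← hcard, hK]; exact dvd_pow_self p hm.ne'
  have : p = ringChar K := (Nat.prime_dvd_prime_iff_eq hp hq).1 (hp.dvd_of_dvd_pow hdvd)
  rw [this]; exact ringChar.charP K

set_option maxHeartbeats 2000000 in
theorem stmt12 (p s m : ℕ) (hp : p.Prime) (hodd : Odd p) (hs : 0 < s) (hm : 0 < m)
    (K : Type) [Field K] [Fintype K] (hK : Fintype.card K = p ^ m)
    (h3 : p ^ m % 4 = 3) (α β : K) (hα : α ≠ 0) (hns : ¬ IsSquare α) (hβ : β ≠ 0)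
    (α₀ : K) (hα₀ : α₀ ^ p ^ s = α) (γ : K) (hγ : γ ^ 4 = -4 * α₀) :
    ∀ I : Ideal (RC K (tR K α + tR K β * uR K) (4 * p ^ s)),
      ∃ i j : ℕ, i ≤ 2 * p ^ s ∧ j ≤ 2 * p ^ s ∧
        I = Ideal.span {mkC K (tR K α + tR K β * uR K) (4 * p ^ s)
          (qR K γ ^ i * qR K (-γ) ^ j)} := by
  -- basic facts
  haveI hchar : CharP K p := charP_of_card hp hm hK
  haveI : Fact p.Prime := ⟨hp⟩
  have h2 : (2:K) ≠ 0 := by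
    intro h
    have hpd : p ∣ 2 := (CharP.cast_eq_zero_iff K p 2).1 (by exact_mod_cast h)
    have hp2 : p = 2 := (Nat.prime_dvd_prime_iff_eq hp Nat.prime_two).1 hpd
    rw [hp2] at hodd
    exact (by decide : ¬ Odd 2) hodd
  have hsq : ¬ IsSquare (-1 : K) := by
    rw [FiniteField.isSquare_neg_one_iff, hK]
    simp [h3]
  have hps : p ^ s ≠ 0 := pow_ne_zero s hp.pos.ne'
  have hα₀0 : α₀ ≠ 0 := by rintro rfl; exact hα (by rw [← hα₀, zero_pow hps])
  have h4 : (4:K) ≠ 0 := by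
    intro h; apply h2
    have h22 : (2:K)*2 = 0 := by rw [show (2:K)*2 = 4 by norm_num, h]
    rcases mul_eq_zero.1 h22 with h'|h' <;> exact h'
  have hγ0 : γ ≠ 0 := by
    rintro rfl
    apply hα₀0
    have h0 : (0:K) = -4 * α₀ := by simpa using hγ
    have : (-4:K) = 0 ∨ α₀ = 0 := mul_eq_zero.1 h0.symm
    rcases this with h'|h'
    · exact absurd (neg_eq_zero.1 h') h4
    · exact h'
  -- notation
  set n : ℕ := 4 * p ^ s with hn
  set N : ℕ := 2 * p ^ s with hN
  set lam : Ru K := tR K α + tR K β * uR K with hlam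
  have hn0 : n ≠ 0 := by positivity
  intro I
  -- the target polynomial
  set f : K[X] := (Qq γ * Qq (-γ)) ^ N with hf
  have hQQ : Qq γ * Qq (-γ) = X ^ 4 - C α₀ := Qq_mul h2 γ α₀ hγ
  have hfrob : ((X:K[X]) ^ 4 - C α₀) ^ p ^ s = X ^ n - C α := by
    haveI : CharP K[X] p := Polynomial.instCharP p
    rw [sub_eq_add_neg, add_pow_char_pow, sub_eq_add_neg, ← pow_mul,
      (Odd.pow hodd).neg_pow, ← C_pow, hα₀, hn]
  have hfsq : f = ((X:K[X]) ^ n - C α) ^ 2 := by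
    rw [hf, hQQ, ← hfrob, ← pow_mul, hN, mul_comm (p^s) 2, pow_mul]
  -- the comparison ring `A = K[x]/(f)`
  have hmonicf : f.Monic := ((Qq_monic γ).mul (Qq_monic (-γ))).pow _
  -- the square root of zero in `A`
  set w : AdjoinRoot f := AdjoinRoot.mk f (C β⁻¹ * (X ^ n - C α)) with hw
  have hw20 : w ^ 2 = 0 := by
    rw [hw, ← map_pow]
    have hsq2 : (C β⁻¹ * ((X:K[X]) ^ n - C α)) ^ 2 = C (β⁻¹^2) * f := by
      rw [hfsq, mul_pow, ← C_pow]
    rw [hsq2, map_mul, AdjoinRoot.mk_self, mul_zero]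
  have hvan2 : ∀ g ∈ Ideal.span {(X:K[X])^2},
      (eval₂RingHom (algebraMap K (AdjoinRoot f)) w) g = 0 := by
    intro g hg
    rw [Ideal.mem_span_singleton] at hg
    obtain ⟨c, rfl⟩ := hg
    rw [map_mul]
    have hX2 : (eval₂RingHom (algebraMap K (AdjoinRoot f)) w) ((X:K[X])^2) = 0 := by
      rw [coe_eval₂RingHom, eval₂_X_pow, hw20]
    rw [hX2, zero_mul]
  set θ : Ru K →+* AdjoinRoot f := Ideal.Quotient.lift _ _ hvan2 with hθ
  have hθt : ∀ a : K, θ (tR K a) = AdjoinRoot.mk f (C a) := by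
    intro a
    rw [hθ, tR, Ideal.Quotient.lift_mk, coe_eval₂RingHom, eval₂_C, AdjoinRoot.algebraMap_eq]
    rfl
  have hθu : θ (uR K) = w := by
    rw [hθ, uR, Ideal.Quotient.lift_mk, coe_eval₂RingHom, eval₂_X]
  -- the map `Φ : Ru[X] → A`
  set Φ : (Ru K)[X] →+* AdjoinRoot f := eval₂RingHom θ (AdjoinRoot.root f) with hΦ
  have hΦX : Φ X = AdjoinRoot.root f := by rw [hΦ, coe_eval₂RingHom, eval₂_X]
  have hΦC : ∀ r : Ru K, Φ (C r) = θ r := by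
    intro r; rw [hΦ, coe_eval₂RingHom, eval₂_C]
  have hker : Φ (X ^ n - C lam) = 0 := by
    rw [map_sub, map_pow, hΦX, hΦC, hlam, map_add, map_mul, hθt, hθt, hθu, hw,
      ← AdjoinRoot.mk_X, ← map_pow, ← map_mul, ← map_add, ← map_sub]
    have hc : C β * (C β⁻¹ * ((X:K[X]) ^ n - C α)) = X ^ n - C α := by
      rw [← mul_assoc, ← C_mul, mul_inv_cancel₀ hβ, C_1, one_mul]
    rw [hc, show (X:K[X])^n - (C α + (X ^ n - C α)) = 0 by ring, map_zero]
  -- the map `φ : RC → A`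
  have hvanish : ∀ g ∈ Ideal.span {(X : (Ru K)[X]) ^ n - C lam}, Φ g = 0 := by
    intro g hg
    obtain ⟨c, rfl⟩ := Ideal.mem_span_singleton'.1 hg
    rw [map_mul, hker, mul_zero]
  haveI : (Ideal.span {(X : (Ru K)[X]) ^ n - C lam}).IsTwoSided :=
    ⟨fun b ha => mul_comm b _ ▸ Ideal.mul_mem_left _ b ha⟩
  set φ : RC K lam n →+* AdjoinRoot f := Ideal.Quotient.lift _ Φ hvanish with hφ
  have hmkC : ∀ g, φ (mkC K lam n g) = Φ g := fun g => Ideal.Quotient.lift_mk _ _ _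
  -- surjectivity
  set TRu : K →+* Ru K := (Ideal.Quotient.mk _).comp (C : K →+* K[X]) with hTRu
  have hTRut : ∀ a : K, TRu a = tR K a := fun _ => rfl
  have hkey : Φ.comp (mapRingHom TRu) = AdjoinRoot.mk f := by
    apply Polynomial.ringHom_ext
    · intro a
      rw [RingHom.comp_apply, coe_mapRingHom, map_C, hΦC, hTRut, hθt]
    · rw [RingHom.comp_apply, coe_mapRingHom, map_X, hΦX, AdjoinRoot.mk_X]
  have hsurjφ : Function.Surjective φ := by
    intro a
    obtain ⟨g, rfl⟩ := AdjoinRoot.mk_surjective a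
    refine ⟨mkC K lam n (g.map TRu), ?_⟩
    rw [hmkC]
    have := congrArg (fun ψ => ψ g) hkey
    simpa using this
  -- cardinalities
  have hmonic2 : ((X:K[X])^2).Monic := monic_X_pow 2
  haveI finRu : Finite (Ru K) := finite_adjoinRoot hmonic2
  have cardRu : Nat.card (Ru K) = Nat.card K ^ 2 := by
    have h := natCard_adjoinRoot hmonic2
    rwa [natDegree_X_pow] at h
  haveI : Nontrivial (Ru K) := by
    rw [← Finite.one_lt_card_iff_nontrivial, cardRu]
    have h1 : 1 < Nat.card K := Finite.one_lt_card_iff_nontrivial.2 inferInstance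
    exact Nat.one_lt_pow (by norm_num) h1
  have hmonicn : ((X:(Ru K)[X])^n - C lam).Monic := monic_X_pow_sub_C lam hn0
  haveI finRC : Finite (RC K lam n) := finite_adjoinRoot hmonicn
  haveI finA : Finite (AdjoinRoot f) := finite_adjoinRoot hmonicf
  have hdegf : f.natDegree = 8 * p ^ s := by
    rw [hf, natDegree_pow, Monic.natDegree_mul (Qq_monic γ) (Qq_monic (-γ)),
      Qq_natDegree, Qq_natDegree, hN]
    ring
  have cardRC : Nat.card (RC K lam n) = Nat.card (Ru K) ^ n := by
    have h := natCard_adjoinRoot hmonicn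
    rwa [natDegree_X_pow_sub_C] at h
  have cardA : Nat.card (AdjoinRoot f) = Nat.card K ^ (8 * p ^ s) := by
    have h := natCard_adjoinRoot hmonicf
    rwa [hdegf] at h
  have hcards : Nat.card (RC K lam n) = Nat.card (AdjoinRoot f) := by
    rw [cardRC, cardRu, cardA, ← pow_mul, hn]
    congr 1
    ring
  have hbij : Function.Bijective φ := by
    rw [Nat.bijective_iff_surjective_and_card]
    exact ⟨hsurjφ, hcards⟩
  set e : RC K lam n ≃+* AdjoinRoot f := RingEquiv.ofBijective φ hbij with he
  -- classification of ideals of A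
  classical
  letI : GCDMonoid K[X] := EuclideanDomain.gcdMonoid _
  set J : Ideal (AdjoinRoot f) := Ideal.map (e : RC K lam n →+* AdjoinRoot f) I with hJ
  set J' : Ideal K[X] := Ideal.comap (AdjoinRoot.mk f) J with hJ'
  obtain ⟨d, hdJ'⟩ := (IsPrincipalIdealRing.principal J').principal
  have hfJ' : f ∈ J' := by
    rw [hJ', Ideal.mem_comap, AdjoinRoot.mk_self]
    exact J.zero_mem
  have hdf : d ∣ f := by
    rw [hdJ'] at hfJ'
    exact Ideal.mem_span_singleton.1 hfJ'
  have hirr1 : Irreducible (Qq γ) := Qq_irreducible h2 hsq hγ0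
  have hirr2 : Irreducible (Qq (-γ)) := Qq_irreducible h2 hsq (neg_ne_zero.2 hγ0)
  have hdf' : d ∣ Qq γ ^ N * Qq (-γ) ^ N := by
    rw [hf, mul_pow] at hdf
    exact hdf
  obtain ⟨d1, d2, hd1, hd2, rfl⟩ := exists_dvd_and_dvd_of_dvd_mul hdf'
  obtain ⟨i, hiN, hassoc1⟩ :=
    (dvd_prime_pow (UniqueFactorizationMonoid.irreducible_iff_prime.1 hirr1) N).1 hd1
  obtain ⟨j, hjN, hassoc2⟩ :=
    (dvd_prime_pow (UniqueFactorizationMonoid.irreducible_iff_prime.1 hirr2) N).1 hd2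
  refine ⟨i, j, hiN, hjN, ?_⟩
  -- identify the ideal
  have hassoc : Associated (d1 * d2) (Qq γ ^ i * Qq (-γ) ^ j) := hassoc1.mul_mul hassoc2
  obtain ⟨u, hu⟩ := hassoc
  have hJspan : J = Ideal.span {AdjoinRoot.mk f (Qq γ ^ i * Qq (-γ) ^ j)} := by
    have hmc : Ideal.map (AdjoinRoot.mk f) J' = J :=
      Ideal.map_comap_of_surjective _ AdjoinRoot.mk_surjective J
    rw [← hmc, hdJ', Ideal.submodule_span_eq, Ideal.map_span, Set.image_singleton, ← hu, map_mul]
    exact (Ideal.span_singleton_mul_right_unit ((u.isUnit).map (AdjoinRoot.mk f)) _).symm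
  have hΦq : ∀ g' : K, Φ (qR K g') = AdjoinRoot.mk f (Qq g') := by
    intro g'
    unfold qR Qq
    simp only [map_add, map_mul, map_pow, hΦX, hΦC, hθt, AdjoinRoot.mk_X]
  have heq : e (mkC K lam n (qR K γ ^ i * qR K (-γ) ^ j))
      = AdjoinRoot.mk f (Qq γ ^ i * Qq (-γ) ^ j) := by
    have hcoe : ∀ x, e x = φ x := fun _ => rfl
    rw [hcoe, hmkC, map_mul, map_pow, map_pow, hΦq, hΦq, map_mul, map_pow, map_pow]
  have : I = Ideal.map (e.symm : AdjoinRoot f →+* RC K lam n) J := by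
    rw [hJ, Ideal.map_of_equiv]
  rw [this, hJspan, Ideal.map_span, Set.image_singleton]
  simp only [RingEquiv.coe_toRingHom]
  rw [← heq, RingEquiv.symm_apply_apply]
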